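/- Let W ⊆ O(n) be a finite group acting irreducibly on ℝⁿ and L a one-dimensional W-invariant-orbit-generating subspace, i.e. the span of ⋃_{w ∈ W} w(L) equals ℝⁿ. Then there exists δ ∈ (0,1) such that for every r > 0 the ball B(0, δr) is contained in the convex hull of ⋃_{w ∈ W} w(L ∩ B(0,r)). -/

import Mathlib

open Pointwise


/-- If a finite group `W` of linear isometries acts irreducibly on `ℝⁿ` and `L` is a
one-dimensional subspace whose `W`-orbit spans `ℝⁿ`, then there is `δ ∈ (0,1)` such
that for every `r > 0` the ball `B(0, δ r)` is contained in the convex hull of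
`⋃_{w ∈ W} w(L ∩ B(0,r))`. -/
theorem stmt_3 {n : ℕ}
    (W : Subgroup (EuclideanSpace ℝ (Fin n) ≃ₗᵢ[ℝ] EuclideanSpace ℝ (Fin n)))
    (hWfin : (W : Set (EuclideanSpace ℝ (Fin n) ≃ₗᵢ[ℝ] EuclideanSpace ℝ (Fin n))).Finite)
    (hirr : ∀ V : Submodule ℝ (EuclideanSpace ℝ (Fin n)),
      (∀ w ∈ W, ∀ x ∈ V, w x ∈ V) → V = ⊥ ∨ V = ⊤)
    (L : Submodule ℝ (EuclideanSpace ℝ (Fin n)))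
    (hL : Module.finrank ℝ L = 1)
    (hspan : Submodule.span ℝ (⋃ w ∈ W, (w : EuclideanSpace ℝ (Fin n) →
      EuclideanSpace ℝ (Fin n)) '' (L : Set (EuclideanSpace ℝ (Fin n)))) = ⊤) :
    ∃ δ ∈ Set.Ioo (0:ℝ) 1, ∀ r > (0:ℝ),
      Metric.closedBall (0 : EuclideanSpace ℝ (Fin n)) (δ * r) ⊆
        convexHull ℝ (⋃ w ∈ W, (w : EuclideanSpace ℝ (Fin n) →
          EuclideanSpace ℝ (Fin n)) '' ((L : Set (EuclideanSpace ℝ (Fin n))) ∩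
            Metric.closedBall 0 r)) := by
  classical
  set E := EuclideanSpace ℝ (Fin n)
  set S : Set E := ⋃ w ∈ W, (w : E → E) '' ((L : Set E) ∩ Metric.closedBall 0 1) with hS
  have h0S : (0:E) ∈ S := by
    refine Set.mem_biUnion W.one_mem ⟨0, ⟨L.zero_mem, by simp⟩, by simp⟩
  -- span of S is everything
  have hspanS : Submodule.span ℝ S = ⊤ := by
    rw [eq_top_iff, ← hspan, Submodule.span_le]
    rintro x hx
    simp only [Set.mem_iUnion] at hx
    obtain ⟨w, hw, v, hv, rfl⟩ := hx
    set c : ℝ := max 1 ‖v‖ with hc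
    have hc1 : (1:ℝ) ≤ c := le_max_left _ _
    have hc0 : (0:ℝ) < c := lt_of_lt_of_le one_pos hc1
    have hu : c⁻¹ • v ∈ (L : Set E) ∩ Metric.closedBall 0 1 := by
      refine ⟨L.smul_mem _ hv, ?_⟩
      rw [Metric.mem_closedBall, dist_zero_right, norm_smul, norm_inv, Real.norm_of_nonneg hc0.le]
      rw [inv_mul_le_iff₀ hc0, mul_one]
      exact le_max_right _ _
    have hmem : (w : E → E) (c⁻¹ • v) ∈ S :=
      Set.mem_biUnion hw ⟨c⁻¹ • v, hu, rfl⟩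
    have : (w : E → E) v = c • (w : E → E) (c⁻¹ • v) := by
      rw [map_smul, smul_smul, mul_inv_cancel₀ hc0.ne', one_smul]
    show (w : E → E) v ∈ Submodule.span ℝ S
    rw [this]
    exact Submodule.smul_mem _ _ (Submodule.subset_span hmem)
  -- symmetry of S
  have hsymm : ∀ y ∈ S, -y ∈ S := by
    rintro y hy
    simp only [hS, Set.mem_iUnion] at hy ⊢
    obtain ⟨w, hw, v, hv, rfl⟩ := hy
    exact ⟨w, hw, -v, ⟨L.neg_mem hv.1, by simpa using hv.2⟩, by simp⟩
  set K : Set E := convexHull ℝ S with hK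
  have hKconv : Convex ℝ K := convex_convexHull ℝ S
  -- affine span of K is top
  have haffS : affineSpan ℝ S = ⊤ := by
    rw [← AffineSubspace.coe_eq_univ_iff, ← Set.insert_eq_of_mem h0S,
      affineSpan_insert_zero, hspanS, Submodule.top_coe]
  have haff : affineSpan ℝ K = ⊤ :=
    top_le_iff.mp (haffS ▸ affineSpan_mono ℝ (subset_convexHull ℝ S))
  have hint : (interior K).Nonempty := hKconv.interior_nonempty_iff_affineSpan_eq_top.mpr haff
  obtain ⟨x, hx⟩ := hint
  have hnegS : -S = S := by
    ext y
    rw [Set.mem_neg]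
    constructor
    · intro h
      have h' := hsymm _ h
      rwa [neg_neg] at h'
    · intro h
      exact hsymm y h
  have hnegK : -K = K := by
    rw [hK, ← convexHull_neg, hnegS]
  have hnx : -x ∈ interior K := by
    have h1 : -x ∈ -interior K := Set.neg_mem_neg.mpr hx
    have h2 : interior (-K) = -interior K :=
      ((Homeomorph.neg E).preimage_interior K).symm
    rwa [← h2, hnegK] at h1
  have h0int : (0:E) ∈ interior K := by
    have h2 := hKconv.interior hx hnx (by norm_num : (0:ℝ) ≤ 1/2)
      (by norm_num : (0:ℝ) ≤ 1/2) (by norm_num)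
    simpa using h2
  obtain ⟨ε, hε, hball⟩ := Metric.mem_nhds_iff.mp (mem_interior_iff_mem_nhds.mp h0int)
  refine ⟨min (ε/2) (1/2), ⟨lt_min (by linarith) (by norm_num), lt_of_le_of_lt (min_le_right _ _) (by norm_num)⟩, ?_⟩
  intro r hr x hxmem
  set δ := min (ε/2) (1/2)
  have hδε : δ < ε := lt_of_le_of_lt (min_le_left _ _) (by linarith)
  have hy : r⁻¹ • x ∈ K := by
    apply hball
    rw [Metric.mem_ball, dist_zero_right, norm_smul, norm_inv, Real.norm_of_nonneg hr.le]
    rw [Metric.mem_closedBall, dist_zero_right] at hxmem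
    calc r⁻¹ * ‖x‖ ≤ r⁻¹ * (δ * r) := by
          apply mul_le_mul_of_nonneg_left hxmem (inv_nonneg.mpr hr.le)
      _ = δ := by field_simp
      _ < ε := hδε
  have hxr : x = r • (r⁻¹ • x) := by rw [smul_smul, mul_inv_cancel₀ hr.ne', one_smul]
  have hsub : (r • S : Set E) ⊆ ⋃ w ∈ W, (w : E → E) '' ((L : Set E) ∩ Metric.closedBall 0 r) := by
    rintro _ ⟨y, hy, rfl⟩
    simp only [hS, Set.mem_iUnion] at hy
    obtain ⟨w, hw, v, hv, rfl⟩ := hy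
    refine Set.mem_biUnion hw ⟨r • v, ⟨L.smul_mem _ hv.1, ?_⟩, by rw [map_smul]⟩
    rw [Metric.mem_closedBall, dist_zero_right, norm_smul, Real.norm_of_nonneg hr.le]
    have := hv.2
    rw [Metric.mem_closedBall, dist_zero_right] at this
    calc r * ‖v‖ ≤ r * 1 := by nlinarith
      _ = r := mul_one r
  rw [hxr]
  have : r • (r⁻¹ • x) ∈ (r • K : Set E) := Set.smul_mem_smul_set hy
  rw [hK, ← convexHull_smul] at this
  exact convexHull_mono hsub this
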